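/- Every prime bull-free graph is nearly \overline{C_ℓ}-free for every ℓ ≥ 6: for every vertex v, the subgraph induced on the anti-neighborhood A(v) contains no induced complement of C_ℓ with ℓ ≥ 6. -/

import Mathlib

open SimpleGraph

/-- The dart: vertices a,b,c,d,e = 0,1,2,3,4; edges ab, ac, ad, bd, cd, de. -/
def dartGraph : SimpleGraph (Fin 5) :=
  SimpleGraph.fromEdgeSet {s(0,1), s(0,2), s(0,3), s(1,3), s(2,3), s(3,4)}

/-- The bull: vertices a,b,c,d,e = 0,1,2,3,4; edges ab, bc, cd, be, ce. -/
def bullGraph : SimpleGraph (Fin 5) :=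
  SimpleGraph.fromEdgeSet {s(0,1), s(1,2), s(2,3), s(1,4), s(2,4)}

/-- The house: C4 on v1..v4 = 0..3 plus v5 = 4 adjacent to v2 = 1 and v3 = 2. -/
def houseGraph : SimpleGraph (Fin 5) :=
  SimpleGraph.fromEdgeSet {s(0,1), s(1,2), s(2,3), s(3,0), s(4,1), s(4,2)}

/-- Anti-neighborhood of a vertex: all vertices distinct from and nonadjacent to `v`. -/
def vertexAnti {V : Type*} (G : SimpleGraph V) (v : V) : Set V :=
  {u | u ≠ v ∧ ¬ G.Adj v u}

/-- Anti-neighborhood of a set `S`: vertices outside `S` with no neighbor in `S`. -/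
def antiNbhd {V : Type*} (G : SimpleGraph V) (S : Set V) : Set V :=
  {v | v ∉ S ∧ ∀ u ∈ S, ¬ G.Adj v u}

/-- Contact vertices of `S`: outside `S`, with a neighbor in `S` and a neighbor in `antiNbhd G S`. -/
def contactSet {V : Type*} (G : SimpleGraph V) (S : Set V) : Set V :=
  {v | v ∉ S ∧ (∃ u ∈ S, G.Adj v u) ∧ ∃ w ∈ antiNbhd G S, G.Adj v w}

/-- `G` has a clique cutset: a clique whose removal disconnects the graph. -/
def HasCliqueCutset {V : Type*} (G : SimpleGraph V) : Prop :=
  ∃ C : Set V, G.IsClique C ∧ ¬ (G.induce Cᶜ).Preconnected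

/-- `U` is a module: no outside vertex distinguishes two vertices of `U`. -/
def IsModule {V : Type*} (G : SimpleGraph V) (U : Set V) : Prop :=
  ∀ z ∉ U, (∀ x ∈ U, G.Adj z x) ∨ (∀ x ∈ U, ¬ G.Adj z x)

/-- `G` is prime: all its modules are trivial. -/
def IsPrime {V : Type*} (G : SimpleGraph V) : Prop :=
  ∀ U : Set V, IsModule G U → U = ∅ ∨ (∃ x, U = {x}) ∨ U = Set.univ

/-- `G` is perfect: every induced subgraph has chromatic number equal to clique number. -/
def IsPerfect {V : Type*} (G : SimpleGraph V) : Prop :=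
  ∀ s : Set V, (G.induce s).chromaticNumber = ((G.induce s).cliqueNum : ℕ∞)

/-- Distance from a vertex to a set of vertices. -/
noncomputable def setDist {V : Type*} (G : SimpleGraph V) (v : V) (S : Set V) : ℕ :=
  sInf {n | ∃ u ∈ S, n = G.dist v u}

private lemma no_bull {V : Type*} {G : SimpleGraph V} (hbull : IsEmpty (bullGraph ↪g G))
    {a b c d e : V}
    (nac : a ≠ c) (nad : a ≠ d) (nae : a ≠ e) (nbd : b ≠ d) (nde : d ≠ e)
    (hab : G.Adj a b) (hbc : G.Adj b c) (hcd : G.Adj c d) (hbe : G.Adj b e) (hce : G.Adj c e)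
    (hac : ¬G.Adj a c) (had : ¬G.Adj a d) (hae : ¬G.Adj a e) (hbd : ¬G.Adj b d) (hde : ¬G.Adj d e) :
    False := by
  have nab := hab.ne
  have nbc := hbc.ne
  have ncd := hcd.ne
  have nbe := hbe.ne
  have nce := hce.ne
  have hba := hab.symm; have hcb := hbc.symm; have hdc := hcd.symm
  have heb := hbe.symm; have hec := hce.symm
  have hca : ¬G.Adj c a := fun h => hac h.symm
  have hda : ¬G.Adj d a := fun h => had h.symm
  have hea : ¬G.Adj e a := fun h => hae h.symm
  have hdb : ¬G.Adj d b := fun h => hbd h.symm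
  have hed : ¬G.Adj e d := fun h => hde h.symm
  apply hbull.false
  refine ⟨⟨![a,b,c,d,e], ?_⟩, ?_⟩
  · intro i j hf
    fin_cases i <;> fin_cases j <;> simp_all <;> tauto
  · intro i j
    fin_cases i <;> fin_cases j <;>
      simp [bullGraph, fromEdgeSet_adj, Sym2.eq_iff, G.irrefl] <;> tauto

open scoped Fin.NatCast Fin.CommRing in
theorem stmt9 {V : Type*} [Fintype V] (G : SimpleGraph V)
    (hprime : IsPrime G)
    (hbull : IsEmpty (bullGraph ↪g G))
    (v : V) (l : ℕ) (hl : 6 ≤ l) :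
    IsEmpty ((cycleGraph l)ᶜ ↪g G.induce (vertexAnti G v)) := by
  obtain ⟨k, rfl⟩ : ∃ k, l = k + 6 := ⟨l - 6, by omega⟩
  constructor
  intro f
  set c : Fin (k+6) → V := fun i => ((f i : {u // u ∈ vertexAnti G v}) : V) with hc
  have hmem : ∀ i, (c i) ≠ v ∧ ¬ G.Adj v (c i) := fun i => (f i).2
  have hinj : Function.Injective c := fun i j h => f.injective (Subtype.ext h)
  have hadj : ∀ i j : Fin (k+6), G.Adj (c i) (c j) ↔ (i ≠ j ∧ ¬ (cycleGraph (k+6)).Adj i j) := by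
    intro i j
    have h1 : (G.induce (vertexAnti G v)).Adj (f i) (f j) ↔ ((cycleGraph (k+6))ᶜ).Adj i j :=
      f.map_adj_iff
    rw [compl_adj] at h1
    exact h1
  -- arithmetic helpers
  have hvc : ∀ m : ℕ, m < k + 6 → ((m : Fin (k+6))).val = m := fun m hm => by
    simp [Fin.val_natCast, Nat.mod_eq_of_lt hm]
  have wshift : ∀ (j : Fin (k+6)) (s d : ℕ),
      (j + (s : Fin (k+6))) + (d : Fin (k+6)) = j + ((s + d : ℕ) : Fin (k+6)) := by
    intro j s d; push_cast; ring
  have key_ne : ∀ (j : Fin (k+6)) (d : ℕ), 0 < d → d < k+6 → j ≠ j + (d : Fin (k+6)) := by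
    intro j d h0 h6 h
    have h2 : (d : Fin (k+6)) = 0 := (left_eq_add.mp h)
    have h3 := congrArg Fin.val h2
    rw [hvc d h6] at h3
    simp at h3
    omega
  have key_nadj : ∀ (j : Fin (k+6)), ¬ G.Adj (c j) (c (j + ((1:ℕ) : Fin (k+6)))) := by
    intro j h
    rw [hadj] at h
    apply h.2
    rw [cycleGraph_adj']
    right
    rw [add_sub_cancel_left]
    exact hvc 1 (by omega)
  have key_adj : ∀ (j : Fin (k+6)) (d : ℕ), 2 ≤ d → d ≤ 4 →
      G.Adj (c j) (c (j + (d : Fin (k+6)))) := by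
    intro j d h2 h4
    rw [hadj]
    refine ⟨key_ne j d (by omega) (by omega), ?_⟩
    rw [cycleGraph_adj']
    rintro (h | h)
    · rw [sub_add_cancel_left] at h
      have h5 : -(d : Fin (k+6)) = ((1:ℕ) : Fin (k+6)) := Fin.ext (by rw [h, hvc 1 (by omega)])
      have h6 : ((d + 1 : ℕ) : Fin (k+6)) = 0 := by
        push_cast
        rw [show (1 : Fin (k+6)) = ((1:ℕ) : Fin (k+6)) from Nat.cast_one.symm, ← h5]
        ring
      have h7 := congrArg Fin.val h6
      rw [hvc (d+1) (by omega)] at h7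
      simp at h7
    · rw [add_sub_cancel_left] at h
      rw [hvc d (by omega)] at h
      omega
  -- window helpers for a base i
  have hA : ∀ (i : Fin (k+6)) (s d : ℕ), 2 ≤ d → d ≤ 4 →
      G.Adj (c (i + ((s:ℕ) : Fin (k+6)))) (c (i + ((s+d : ℕ) : Fin (k+6)))) := by
    intro i s d h2 h4
    have := key_adj (i + ((s:ℕ) : Fin (k+6))) d h2 h4
    rwa [wshift] at this
  have hN1 : ∀ (i : Fin (k+6)) (s : ℕ),
      ¬ G.Adj (c (i + ((s:ℕ) : Fin (k+6)))) (c (i + ((s+1 : ℕ) : Fin (k+6)))) := by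
    intro i s
    have := key_nadj (i + ((s:ℕ) : Fin (k+6)))
    rwa [wshift] at this
  have hNE : ∀ (i : Fin (k+6)) (s d : ℕ), 0 < d → d ≤ 5 →
      c (i + ((s:ℕ) : Fin (k+6))) ≠ c (i + ((s+d : ℕ) : Fin (k+6))) := by
    intro i s d h0 h5 h
    have h1 := hinj h
    rw [← wshift] at h1
    exact key_ne (i + ((s:ℕ) : Fin (k+6))) d h0 (by omega) h1
  have hzero : ∀ i : Fin (k+6), i + ((0:ℕ) : Fin (k+6)) = i := by intro i; simp
  -- boundary lemma
  have boundary : ∀ x : V, (∃ i, G.Adj x (c i)) → (∃ j, ¬ G.Adj x (c j)) →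
      ∃ i, G.Adj x (c i) ∧ ¬ G.Adj x (c (i + ((1:ℕ) : Fin (k+6)))) := by
    rintro x ⟨i0, hi0⟩ ⟨j0, hj0⟩
    by_contra hcon
    push_neg at hcon
    have hall : ∀ m : ℕ, G.Adj x (c (i0 + (m : Fin (k+6)))) := by
      intro m
      induction m with
      | zero => rw [hzero]; exact hi0
      | succ p ih =>
        have := hcon _ ih
        rwa [wshift] at this
    apply hj0
    have hrep : j0 = i0 + (((j0 - i0).val : ℕ) : Fin (k+6)) := by
      rw [Fin.cast_val_eq_self]
      ring
    rw [hrep]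
    exact hall _
  -- sets
  set K : Set V := Set.range c with hK
  set B : Set V := {t | t ∉ K ∧ ∀ i, ¬ G.Adj t (c i)} with hB
  set D : Set V := {x | x ∉ B ∧ ∃ y ∈ B, G.Adj y x} with hD
  let Core : ℕ → Set V := fun n =>
    Nat.rec K (fun _ S => S ∪ {u | u ∉ B ∧ ∃ t ∈ S, u ≠ t ∧ ¬ G.Adj u t}) n
  have hCoreSucc : ∀ n, Core (n+1) = Core n ∪ {u | u ∉ B ∧ ∃ t ∈ Core n, u ≠ t ∧ ¬ G.Adj u t} :=
    fun n => rfl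
  have hKcore : ∀ n, K ⊆ Core n := by
    intro n
    induction n with
    | zero => exact subset_rfl
    | succ p ih => exact ih.trans Set.subset_union_left
  have hBcore : ∀ n, ∀ t ∈ Core n, t ∉ B := by
    intro n
    induction n with
    | zero => intro t ht htB; exact htB.1 ht
    | succ p ih =>
      rintro t (ht | ht)
      · exact ih t ht
      · exact ht.1
  have coreNbr : ∀ n, ∀ t ∈ Core n, ∃ m, G.Adj t (c m) := by
    intro n
    induction n with
    | zero =>
      rintro t ⟨i, rfl⟩
      exact ⟨i + ((2:ℕ) : Fin (k+6)), key_adj i 2 (by omega) (by omega)⟩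
    | succ p ih =>
      rintro t (ht | ⟨htB, _⟩)
      · exact ih t ht
      · by_cases hKt : t ∈ K
        · obtain ⟨i, rfl⟩ := hKt
          exact ⟨i + ((2:ℕ) : Fin (k+6)), key_adj i 2 (by omega) (by omega)⟩
        · rw [hB] at htB
          simp only [Set.mem_setOf_eq, not_and, not_forall, not_not] at htB
          exact htB hKt
  -- window bull lemma (mixed x attached to B)
  have window_bulls : ∀ (y x : V), (∀ m, ¬ G.Adj y (c m)) → (∀ m, y ≠ c m) → G.Adj y x →
      (∀ m, x ≠ c m) → ∀ i : Fin (k+6), G.Adj x (c i) →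
      ¬ G.Adj x (c (i + ((1:ℕ) : Fin (k+6)))) → False := by
    intro y x hyK hyne hyx hxne i hx0 hx1
    have hx0' : G.Adj x (c (i + ((0:ℕ) : Fin (k+6)))) := by rw [hzero]; exact hx0
    by_cases p3 : G.Adj x (c (i + ((3:ℕ) : Fin (k+6))))
    · exact no_bull hbull (hyne _) (hyne _) (hyne _) (hxne _) ((hNE i 0 1 (by omega) (by omega)).symm)
        hyx p3 ((hA i 1 2 (by omega) (by omega)).symm) hx0' ((hA i 0 3 (by omega) (by omega)).symm)
        (hyK _) (hyK _) (hyK _) hx1 (fun h => hN1 i 0 h.symm)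
    · by_cases p2 : G.Adj x (c (i + ((2:ℕ) : Fin (k+6))))
      · exact no_bull hbull (hyne _) (hyne _) (hyne _) (hxne _) ((hNE i 2 1 (by omega) (by omega)).symm)
          hyx hx0' (hA i 0 3 (by omega) (by omega)) p2 (hA i 0 2 (by omega) (by omega))
          (hyK _) (hyK _) (hyK _) p3 (fun h => hN1 i 2 h.symm)
      · by_cases p4 : G.Adj x (c (i + ((4:ℕ) : Fin (k+6))))
        · exact no_bull hbull (hyne _) (hyne _) (hyne _) (hxne _) (hNE i 3 1 (by omega) (by omega))
            hyx hx0' (hA i 0 3 (by omega) (by omega)) p4 (hA i 0 4 (by omega) (by omega))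
            (hyK _) (hyK _) (hyK _) p3 (hN1 i 3)
        · exact no_bull hbull
            ((hNE i 0 1 (by omega) (by omega)).symm) ((hxne _).symm) (hNE i 1 1 (by omega) (by omega))
            ((hxne _).symm) (hxne _)
            (hA i 1 3 (by omega) (by omega)) ((hA i 0 4 (by omega) (by omega)).symm) hx0'.symm
            ((hA i 2 2 (by omega) (by omega)).symm) (hA i 0 2 (by omega) (by omega))
            (fun h => hN1 i 0 h.symm) (fun h => hx1 h.symm) (hN1 i 1)
            (fun h => p4 h.symm) p2
  -- step bull lemma: u mixed on K, x complete, y in B adjacent to x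
  have step_mixed : ∀ (y x u : V), (∀ m, ¬ G.Adj y (c m)) → (∀ m, y ≠ c m) → G.Adj y x →
      (∀ m, G.Adj x (c m)) → (∀ m, x ≠ c m) → ¬ G.Adj y u → ¬ G.Adj x u → x ≠ u →
      (∀ m, u ≠ c m) → ∀ i, G.Adj u (c i) → ¬ G.Adj u (c (i + ((1:ℕ) : Fin (k+6)))) → False := by
    intro y x u hyK hyne hyx hxK hxne hyu hxu hxune huK i hu0 hu1
    have hu0' : G.Adj u (c (i + ((0:ℕ) : Fin (k+6)))) := by rw [hzero]; exact hu0
    have hynu : y ≠ u := fun h => hyK i (by rw [h]; exact hu0)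
    by_cases p2 : G.Adj u (c (i + ((2:ℕ) : Fin (k+6))))
    · by_cases p3 : G.Adj u (c (i + ((3:ℕ) : Fin (k+6))))
      · -- bull (y, x, c(P3), u, c(P1))
        exact no_bull hbull (hyne _) hynu (hyne _) hxune ((huK _))
          hyx (hxK _) p3.symm (hxK _) ((hA i 1 2 (by omega) (by omega)).symm)
          (hyK _) hyu (hyK _) hxu hu1
      · -- bull (y, x, c(P0), u, c(P3))
        exact no_bull hbull (hyne _) hynu (hyne _) hxune (huK _)
          hyx (hxK _) hu0'.symm (hxK _) (hA i 0 3 (by omega) (by omega))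
          (hyK _) hyu (hyK _) hxu p3
    · -- bull (y, x, c(P0), u, c(P2))
      exact no_bull hbull (hyne _) hynu (hyne _) hxune (huK _)
        hyx (hxK _) hu0'.symm (hxK _) (hA i 0 2 (by omega) (by omega))
        (hyK _) hyu (hyK _) hxu p2
  -- MAIN CLAIM
  have main : ∀ n, ∀ x ∈ D, ∀ t ∈ Core n, x ≠ t ∧ G.Adj x t := by
    intro n
    induction n with
    | zero =>
      rintro x ⟨hxB, y, hyB, hyx⟩ t ⟨j, rfl⟩
      have hyK : ∀ m, ¬ G.Adj y (c m) := hyB.2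
      have hyne : ∀ m, y ≠ c m := fun m h => hyB.1 ⟨m, h.symm⟩
      have hxne : ∀ m, x ≠ c m := fun m h => hyK m (by rwa [← h])
      refine ⟨hxne j, ?_⟩
      by_contra hnadj
      have hex : ∃ i, G.Adj x (c i) := by
        by_contra hno
        push_neg at hno
        exact hxB ⟨fun hm => (by obtain ⟨m, hm'⟩ := hm; exact hxne m hm'.symm), hno⟩
      obtain ⟨i, hi, hi1⟩ := boundary x hex ⟨j, hnadj⟩
      exact window_bulls y x hyK hyne hyx hxne i hi hi1
    | succ p ih =>
      rintro x hxD t ht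
      rcases ht with ht | ⟨htB, t', ht', hne', hnadj'⟩
      · exact ih x hxD t ht
      · obtain ⟨hxB, y, hyB, hyx⟩ := hxD
        rcases Classical.em (t ∈ Core p) with htp | htp
        · exact ih x ⟨hxB, y, hyB, hyx⟩ t htp
        have hxt : x ≠ t := fun h => hnadj' (h ▸ (ih x ⟨hxB, y, hyB, hyx⟩ t' ht').2)
        refine ⟨hxt, ?_⟩
        by_contra hxu
        have htD : t ∉ D := fun hDt => hnadj' (ih t hDt t' ht').2
        have hyu : ¬ G.Adj y t := fun h => htD ⟨htB, y, hyB, h⟩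
        have hyK : ∀ m, ¬ G.Adj y (c m) := hyB.2
        have hyne : ∀ m, y ≠ c m := fun m h => hyB.1 ⟨m, h.symm⟩
        have hxC : ∀ s ∈ Core p, x ≠ s ∧ G.Adj x s := fun s hs => ih x ⟨hxB, y, hyB, hyx⟩ s hs
        have hxK : ∀ m, G.Adj x (c m) := fun m => (hxC (c m) (hKcore p ⟨m, rfl⟩)).2
        have hxne : ∀ m, x ≠ c m := fun m => (hxC (c m) (hKcore p ⟨m, rfl⟩)).1
        have htK : ∀ m, t ≠ c m := fun m h => htp (h ▸ hKcore p ⟨m, rfl⟩)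
        by_cases hKt : ∀ m, G.Adj t (c m)
        · obtain ⟨m, hm⟩ := coreNbr p t' ht'
          have hynu : y ≠ t := fun h => hyK m (by rw [h]; exact hKt m)
          have hyt' : ¬ G.Adj y t' := fun h =>
            (ih t' ⟨hBcore p t' ht', y, hyB, h⟩ t' ht').1 rfl
          have hynt' : y ≠ t' := fun h => hBcore p t' ht' (h ▸ hyB)
          exact no_bull hbull (hyne m) hynu hynt' hxt hne'
            hyx (hxK m) (hKt m).symm (hxC t' ht').2 hm.symm
            (hyK m) hyu hyt' hxu hnadj'
        · push_neg at hKt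
          have hex : ∃ i, G.Adj t (c i) := by
            by_contra hno
            push_neg at hno
            exact htB ⟨fun hm => (by obtain ⟨m, hm'⟩ := hm; exact htK m hm'.symm), hno⟩
          obtain ⟨i, hi, hi1⟩ := boundary t hex hKt
          exact step_mixed y x t hyK hyne hyx hxK hxne hyu hxu hxt htK i hi hi1
  -- module
  set U : Set V := ⋃ n, Core n with hU
  have hUmod : IsModule G U := by
    intro z hz
    by_cases hzB : z ∈ B
    · right
      intro x hx hadjzx
      obtain ⟨n, hn⟩ := Set.mem_iUnion.mp hx
      exact (main n x ⟨hBcore n x hn, z, hzB, hadjzx⟩ x hn).1 rfl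
    · left
      intro x hx
      obtain ⟨n, hn⟩ := Set.mem_iUnion.mp hx
      by_contra hnadj
      have hzx : z ≠ x := fun h => hz (h ▸ Set.mem_iUnion.mpr ⟨n, hn⟩)
      have hz1 : z ∈ Core (n+1) := Or.inr ⟨hzB, x, hn, hzx, hnadj⟩
      exact hz (Set.mem_iUnion.mpr ⟨n+1, hz1⟩)
  have hc0 : c 0 ∈ U := Set.mem_iUnion.mpr ⟨0, ⟨0, rfl⟩⟩
  have hc1 : c (0 + ((1:ℕ) : Fin (k+6))) ∈ U := Set.mem_iUnion.mpr ⟨0, ⟨_, rfl⟩⟩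
  have hc01 : c 0 ≠ c (0 + ((1:ℕ) : Fin (k+6))) := fun h =>
    key_ne 0 1 (by omega) (by omega) (hinj h)
  rcases hprime U hUmod with h | ⟨x0, h⟩ | h
  · rw [h] at hc0
    exact hc0
  · rw [h] at hc0 hc1
    exact hc01 (hc0.trans hc1.symm)
  · have hvU : v ∈ U := h ▸ Set.mem_univ v
    obtain ⟨n, hn⟩ := Set.mem_iUnion.mp hvU
    refine hBcore n v hn ⟨?_, fun i => (hmem i).2⟩
    rintro ⟨m, hm⟩
    exact (hmem m).1 hm
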